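/- If g = [[a,b],[c,d]] ∈ SL(2,ℂ) maps the closed unit disc into itself under the Möbius action z ↦ (az+b)/(cz+d), then c + d ≠ 0, and consequently g ∈ P⁺ K_ℂ N_ℂ. -/

import Mathlib

open Matrix

noncomputable def pplus (x : ℂ) : Matrix (Fin 2) (Fin 2) ℂ := !![1, x; 0, 1]

noncomputable def kmat (γ : ℂ) : Matrix (Fin 2) (Fin 2) ℂ := !![γ, 0; 0, γ⁻¹]

noncomputable def nmat (s : ℂ) : Matrix (Fin 2) (Fin 2) ℂ :=
  !![1 + Complex.I * s, -(Complex.I * s); Complex.I * s, 1 - Complex.I * s]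

/-- if `g = [[a,b],[c,d]] ∈ SL(2,ℂ)` maps the closed unit disc into itself
under the Möbius action `z ↦ (az+b)/(cz+d)`, then `c + d ≠ 0` and hence
`g ∈ P⁺ K_ℂ N_ℂ`. -/
theorem closed_disc_compression_mem_pkn (a b c d : ℂ) (hdet : a * d - b * c = 1)
    (hmap : ∀ z : ℂ, ‖z‖ ≤ 1 → ‖a * z + b‖ ≤ ‖c * z + d‖) :
    c + d ≠ 0 ∧
    ∃ x γ s : ℂ, γ ≠ 0 ∧ !![a, b; c, d] = pplus x * kmat γ * nmat s := by
  have h : c + d ≠ 0 := by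
    intro h0
    have h1 := hmap 1 (by simp)
    rw [mul_one, mul_one, h0] at h1
    simp only [norm_zero] at h1
    have hab : a + b = 0 := by
      have := norm_nonneg (a + b)
      have : ‖a + b‖ = 0 := le_antisymm h1 this
      exact norm_eq_zero.mp this
    have hz : a * d - b * c = 0 := by
      have hd : d = -c := by linear_combination h0
      have hb : b = -a := by linear_combination hab
      rw [hd, hb]; ring
    rw [hz] at hdet
    exact one_ne_zero hdet.symm
  refine ⟨h, ⟨(c+d)⁻¹ * (a * (c * (c+d)⁻¹) + b * (1 + c * (c+d)⁻¹)), (c+d)⁻¹,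
    -Complex.I * (c * (c+d)⁻¹), inv_ne_zero h, ?_⟩⟩
  ext i j
  fin_cases i <;> fin_cases j <;>
    simp only [pplus, kmat, nmat, Matrix.mul_apply, Fin.sum_univ_two, Matrix.cons_val',
      Matrix.cons_val_zero, Matrix.cons_val_one, Matrix.head_cons, Matrix.head_fin_const,
      Matrix.empty_val', Matrix.cons_val_fin_one, Fin.isValue, Fin.zero_eta, Fin.mk_one,
      Matrix.of_apply]
  · field_simp
    ring_nf
    simp only [Complex.I_sq]
    linear_combination ((c+d)*(2*c+d)) * hdet
  · field_simp
    ring_nf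
    simp only [Complex.I_sq]
    linear_combination (-(c*(c+d))) * hdet
  · field_simp
    ring_nf
    simp only [Complex.I_sq]
    ring_nf
  · field_simp
    ring_nf
    simp only [Complex.I_sq]
    ring_nf
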